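/- Assume f, h, l and V_f are continuous, l ≥ 0, 𝕏 is compact, 𝕌 is compact, 𝕏_f is closed, contains an open neighborhood of the origin, and is controlled invariant; assume N(x) is defined for every x ∈ 𝕏 and there is M ∈ ℕ with N(x) ≤ M for all x ∈ 𝕏. If there exists a class-K∞ function α such that V⁰_N(x) ≤ α(|x|) for all x ∈ 𝕏_f and all N = 0, 1, …, M, then there exists a class-K∞ function β such that V(x) ≤ β(|x|) for all x ∈ 𝕏. -/

import Mathlib

open Set Filter Topology

/-- The state/control spaces are Euclidean spaces. -/
abbrev Vec (n : ℕ) := EuclideanSpace ℝ (Fin n)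

/-- A control `u` is feasible at a state `x` if `u ∈ U`, `f x u ∈ X` and `h x u ∈ Y`. -/
def Feas {n m p : ℕ} (f : Vec n → Vec m → Vec n) (h : Vec n → Vec m → Vec p)
    (X : Set (Vec n)) (U : Set (Vec m)) (Y : Set (Vec p))
    (x : Vec n) (u : Vec m) : Prop :=
  u ∈ U ∧ f x u ∈ X ∧ h x u ∈ Y

/-- The trajectory from `x` under the control sequence `u`: `x(0) = x`, `x(k+1) = f (x k) (u k)`. -/
def traj {n m : ℕ} (f : Vec n → Vec m → Vec n) (x : Vec n) (u : ℕ → Vec m) : ℕ → Vec n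
  | 0 => x
  | k + 1 => f (traj f x u k) (u k)

/-- A control sequence `u(0), …, u(N-1)` is feasible from `x` if each `u k` is feasible at `x(k)`. -/
def FeasSeq {n m p : ℕ} (f : Vec n → Vec m → Vec n) (h : Vec n → Vec m → Vec p)
    (X : Set (Vec n)) (U : Set (Vec m)) (Y : Set (Vec p))
    (x : Vec n) (N : ℕ) (u : ℕ → Vec m) : Prop :=
  ∀ k < N, Feas f h X U Y (traj f x u k) (u k)

/-- The sets `X_N`: `X_0 = Xf`, and `X_{N+1} = {x ∈ X : ∃ u feasible at x, f x u ∈ X_N}`. -/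
def XN {n m p : ℕ} (f : Vec n → Vec m → Vec n) (h : Vec n → Vec m → Vec p)
    (X : Set (Vec n)) (U : Set (Vec m)) (Y : Set (Vec p)) (Xf : Set (Vec n)) :
    ℕ → Set (Vec n)
  | 0 => Xf
  | N + 1 => {x | x ∈ X ∧ ∃ u, Feas f h X U Y x u ∧ f x u ∈ XN f h X U Y Xf N}

/-- `Xf` is controlled invariant. -/
def CtrlInv {n m p : ℕ} (f : Vec n → Vec m → Vec n) (h : Vec n → Vec m → Vec p)
    (X : Set (Vec n)) (U : Set (Vec m)) (Y : Set (Vec p)) (Xf : Set (Vec n)) : Prop :=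
  ∀ x ∈ Xf, ∃ u, Feas f h X U Y x u ∧ f x u ∈ Xf

/-- The set of horizons `N` for which some feasible control sequence of length `N`
from `x` has trajectory ending in `Xf`. -/
def HorizonSet {n m p : ℕ} (f : Vec n → Vec m → Vec n) (h : Vec n → Vec m → Vec p)
    (X : Set (Vec n)) (U : Set (Vec m)) (Y : Set (Vec p)) (Xf : Set (Vec n))
    (x : Vec n) : Set ℕ :=
  {N | ∃ u : ℕ → Vec m, FeasSeq f h X U Y x N u ∧ traj f x u N ∈ Xf}

/-- `N(x)`: the least horizon for which a feasible control sequence from `x` ends in `Xf`. -/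
noncomputable def Nmin {n m p : ℕ} (f : Vec n → Vec m → Vec n) (h : Vec n → Vec m → Vec p)
    (X : Set (Vec n)) (U : Set (Vec m)) (Y : Set (Vec p)) (Xf : Set (Vec n))
    (x : Vec n) : ℕ :=
  sInf (HorizonSet f h X U Y Xf x)

/-- The horizon-`N` cost of the control sequence `u` from `x`. -/
noncomputable def cost {n m : ℕ} (f : Vec n → Vec m → Vec n)
    (l : Vec n → Vec m → ℝ) (Vf : Vec n → ℝ) (x : Vec n) (N : ℕ) (u : ℕ → Vec m) : ℝ :=
  (∑ k ∈ Finset.range N, l (traj f x u k) (u k)) + Vf (traj f x u N)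

/-- The horizon-`N` optimal cost `V⁰_N(x)`: the infimum of the cost over all feasible
control sequences of length `N` from `x` whose trajectory ends in `Xf`. -/
noncomputable def Vopt {n m p : ℕ} (f : Vec n → Vec m → Vec n) (h : Vec n → Vec m → Vec p)
    (X : Set (Vec n)) (U : Set (Vec m)) (Y : Set (Vec p)) (Xf : Set (Vec n))
    (l : Vec n → Vec m → ℝ) (Vf : Vec n → ℝ) (N : ℕ) (x : Vec n) : ℝ :=
  sInf {c : ℝ | ∃ u : ℕ → Vec m,
    FeasSeq f h X U Y x N u ∧ traj f x u N ∈ Xf ∧ c = cost f l Vf x N u}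

/-- Assumption 3: for every `x ∈ Xf` there is a feasible `u` with `f x u ∈ Xf` and
`l x u + Vf (f x u) ≤ Vf x`. -/
def Assumption3 {n m p : ℕ} (f : Vec n → Vec m → Vec n) (h : Vec n → Vec m → Vec p)
    (X : Set (Vec n)) (U : Set (Vec m)) (Y : Set (Vec p)) (Xf : Set (Vec n))
    (l : Vec n → Vec m → ℝ) (Vf : Vec n → ℝ) : Prop :=
  ∀ x ∈ Xf, ∃ u, Feas f h X U Y x u ∧ f x u ∈ Xf ∧ l x u + Vf (f x u) ≤ Vf x

/-- A function `α : [0,∞) → [0,∞)` is of class `K∞` if it is continuous, strictly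
increasing, `α 0 = 0` and `α s → ∞` as `s → ∞`. -/
def IsKInf (α : ℝ → ℝ) : Prop :=
  ContinuousOn α (Ici 0) ∧ StrictMonoOn α (Ici 0) ∧ α 0 = 0 ∧
    Tendsto α atTop atTop ∧ ∀ s ∈ Ici (0 : ℝ), 0 ≤ α s

/-- Proposition 3: with `f, h, l, Vf` continuous, `l ≥ 0`, `X` and `U`
compact, `Xf` closed, containing an open neighborhood of the origin and controlled
invariant, `N(·)` defined on all of `X` and bounded by `M`: if there is a class-K∞
function `α` with `V⁰_N(x) ≤ α(|x|)` on `Xf` for all `N ≤ M`, then there is a class-K∞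
function `β` with `V(x) = V⁰_{N(x)}(x) ≤ β(|x|)` for all `x ∈ X`. -/
theorem stmt_6 {n m p : ℕ} (f : Vec n → Vec m → Vec n) (h : Vec n → Vec m → Vec p)
    (X : Set (Vec n)) (U : Set (Vec m)) (Y : Set (Vec p)) (Xf : Set (Vec n))
    (l : Vec n → Vec m → ℝ) (Vf : Vec n → ℝ)
    (hXfX : Xf ⊆ X)
    (hf : Continuous fun q : Vec n × Vec m => f q.1 q.2)
    (hh : Continuous fun q : Vec n × Vec m => h q.1 q.2)
    (hl : Continuous fun q : Vec n × Vec m => l q.1 q.2)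
    (hVf : Continuous Vf)
    (hlnn : ∀ x u, 0 ≤ l x u)
    (hX : IsCompact X) (hU : IsCompact U) (hXfclosed : IsClosed Xf)
    (hXfnbhd : Xf ∈ 𝓝 (0 : Vec n))
    (hinv : CtrlInv f h X U Y Xf)
    (hreach : ∀ x ∈ X, (HorizonSet f h X U Y Xf x).Nonempty)
    (M : ℕ) (hM : ∀ x ∈ X, Nmin f h X U Y Xf x ≤ M)
    (α : ℝ → ℝ) (hα : IsKInf α)
    (hbound : ∀ N ≤ M, ∀ x ∈ Xf, Vopt f h X U Y Xf l Vf N x ≤ α ‖x‖) :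
    ∃ β : ℝ → ℝ, IsKInf β ∧
      ∀ x ∈ X, Vopt f h X U Y Xf l Vf (Nmin f h X U Y Xf x) x ≤ β ‖x‖ := by
  classical
  -- bounds from compactness
  obtain ⟨L, hL⟩ := (hX.prod hU).bddAbove_image hl.continuousOn
  have hXfc : IsCompact Xf := hX.of_isClosed_subset hXfclosed hXfX
  obtain ⟨B, hB⟩ := hXfc.bddAbove_image hVf.continuousOn
  obtain ⟨B₀, hB₀⟩ := hXfc.bddBelow_image hVf.continuousOn
  set L' : ℝ := max L 0 with hL'def
  set C : ℝ := max (M * L' + B) 0 with hCdef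
  have hC0 : (0 : ℝ) ≤ C := le_max_right _ _
  -- uniform bound on V over X
  have key : ∀ x ∈ X, Vopt f h X U Y Xf l Vf (Nmin f h X U Y Xf x) x ≤ C := by
    intro x hx
    set N := Nmin f h X U Y Xf x with hNdef
    have hNmem : N ∈ HorizonSet f h X U Y Xf x := Nat.sInf_mem (hreach x hx)
    obtain ⟨u, hfeas, hend⟩ := hNmem
    have hstate : ∀ k, k ≤ N → traj f x u k ∈ X := by
      intro k hk
      induction k with
      | zero => exact hx
      | succ k ih => exact (hfeas k (by omega)).2.1
    have hcost : cost f l Vf x N u ≤ M * L' + B := by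
      unfold cost
      have hsum : (∑ k ∈ Finset.range N, l (traj f x u k) (u k)) ≤ N * L' := by
        calc (∑ k ∈ Finset.range N, l (traj f x u k) (u k))
            ≤ ∑ _k ∈ Finset.range N, L' := by
              refine Finset.sum_le_sum fun k hk => ?_
              have hk' := Finset.mem_range.mp hk
              have h1 : l (traj f x u k) (u k) ≤ L :=
                hL ⟨(traj f x u k, u k),
                  Set.mk_mem_prod (hstate k hk'.le) (hfeas k hk').1, rfl⟩
              exact h1.trans (le_max_left _ _)
          _ = N * L' := by simp [mul_comm]
      have hNM : (N : ℝ) * L' ≤ M * L' := by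
        have : (N : ℝ) ≤ M := by exact_mod_cast hM x hx
        exact mul_le_mul_of_nonneg_right this (le_max_right _ _)
      have hend' : Vf (traj f x u N) ≤ B := hB ⟨_, hend, rfl⟩
      linarith
    have hbdd : BddBelow {c : ℝ | ∃ v : ℕ → Vec m,
        FeasSeq f h X U Y x N v ∧ traj f x v N ∈ Xf ∧ c = cost f l Vf x N v} := by
      refine ⟨B₀, ?_⟩
      rintro c ⟨v, _, hvend, rfl⟩
      have h1 : B₀ ≤ Vf (traj f x v N) := hB₀ ⟨_, hvend, rfl⟩
      have h2 : (0 : ℝ) ≤ ∑ k ∈ Finset.range N, l (traj f x v k) (v k) :=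
        Finset.sum_nonneg fun _ _ => hlnn _ _
      unfold cost; linarith
    have hmem : cost f l Vf x N u ∈ {c : ℝ | ∃ v : ℕ → Vec m,
        FeasSeq f h X U Y x N v ∧ traj f x v N ∈ Xf ∧ c = cost f l Vf x N v} :=
      ⟨u, hfeas, hend, rfl⟩
    calc Vopt f h X U Y Xf l Vf N x ≤ cost f l Vf x N u := csInf_le hbdd hmem
      _ ≤ M * L' + B := hcost
      _ ≤ C := le_max_left _ _
  -- small ball inside Xf
  obtain ⟨r, hr, hball⟩ := Metric.mem_nhds_iff.mp hXfnbhd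
  have hCr : (0 : ℝ) ≤ C / r := div_nonneg hC0 hr.le
  refine ⟨fun s => α s + (C / r) * s, ⟨?_, ?_, ?_, ?_, ?_⟩, ?_⟩
  · exact hα.1.add ((continuous_const.mul continuous_id).continuousOn)
  · intro a ha b hb hab
    exact add_lt_add_of_lt_of_le (hα.2.1 ha hb hab)
      (mul_le_mul_of_nonneg_left hab.le hCr)
  · simp [hα.2.2.1]
  · refine Filter.Tendsto.atTop_add_zero_eventuallyLE hα.2.2.2.1 ?_
    filter_upwards [Filter.eventually_ge_atTop (0 : ℝ)] with s hs
    exact mul_nonneg hCr hs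
  · intro s hs
    exact add_nonneg (hα.2.2.2.2 s hs) (mul_nonneg hCr hs)
  · intro x hx
    by_cases hxr : ‖x‖ < r
    · have hxf : x ∈ Xf := hball (mem_ball_zero_iff.mpr hxr)
      have hN0 : Nmin f h X U Y Xf x = 0 :=
        Nat.sInf_eq_zero.mpr (Or.inl ⟨fun _ => 0,
          fun k hk => absurd hk (Nat.not_lt_zero k), hxf⟩)
      rw [hN0]
      have h1 : Vopt f h X U Y Xf l Vf 0 x ≤ α ‖x‖ :=
        hbound 0 (Nat.zero_le M) x hxf
      have h2 : (0 : ℝ) ≤ (C / r) * ‖x‖ := mul_nonneg hCr (norm_nonneg x)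
      linarith
    · push_neg at hxr
      have h1 := key x hx
      have h2 : C ≤ (C / r) * ‖x‖ := by
        rw [div_mul_eq_mul_div, le_div_iff₀ hr]
        exact mul_le_mul_of_nonneg_left hxr hC0
      have h3 : (0 : ℝ) ≤ α ‖x‖ := hα.2.2.2.2 ‖x‖ (norm_nonneg x)
      linarith
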